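/- The class of abstract strategies that arise as extensions of intensional strategies with memory is closed under arbitrary intersections and finite unions, but is not closed under complement. -/

import Mathlib

/-- A derivation over objects `O` and labels `L`: a partial function on ℕ whose
domain is an initial segment, with composable consecutive steps. -/
structure Deriv (O L : Type) where
  step : ℕ → Option (O × L × O)
  initial : ∀ i, step (i + 1) ≠ none → step i ≠ none
  comp : ∀ i s t, step i = some s → step (i + 1) = some t → t.1 = s.2.2

namespace Deriv
/-- Non-empty derivation. -/
def NE {O L : Type} (π : Deriv O L) : Prop := π.step 0 ≠ none
/-- Finite derivation. -/
def Finite {O L : Type} (π : Deriv O L) : Prop := ∃ n, π.step n = none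
/-- Derivation over the set of steps `Γ` of an ARS. -/
def Over {O L : Type} (Γ : Set (O × L × O)) (π : Deriv O L) : Prop :=
  ∀ i s, π.step i = some s → s ∈ Γ
end Deriv

/-- `π₀` is a prefix of `π`. -/
def DPrefix {O L : Type} (π₀ π : Deriv O L) : Prop :=
  ∀ i s, π₀.step i = some s → π.step i = some s

/-- History (trace) of the first `j` steps of a derivation. -/
def histD {O L : Type} (π : Deriv O L) (j : ℕ) : List (O × L) :=
  (List.range j).filterMap fun i => (π.step i).map fun s => (s.1, s.2.1)

/-- Extension of an intensional strategy with memory. -/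
def ExtOf {O L : Type} (lam : List (O × L) → O → Set (O × L × O)) : Set (Deriv O L) :=
  {π | π.NE ∧ ∀ j s, π.step j = some s → s ∈ lam (histD π j) s.1}

/-- Extension of a memoryless intensional strategy. -/
def MExtOf {O L : Type} (lam : O → Set (O × L × O)) : Set (Deriv O L) :=
  {π | π.NE ∧ ∀ j s, π.step j = some s → s ∈ lam s.1}

/-- Well-formedness of an intensional strategy with memory over the ARS `Γ`:
every chosen step has the current object as source and belongs to `Γ`. -/
def WfStrat {O L : Type} (Γ : Set (O × L × O))
    (lam : List (O × L) → O → Set (O × L × O)) : Prop :=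
  ∀ α a s, s ∈ lam α a → s.1 = a ∧ s ∈ Γ

/-- Well-formedness of a memoryless intensional strategy. -/
def MWfStrat {O L : Type} (Γ : Set (O × L × O)) (lam : O → Set (O × L × O)) : Prop :=
  ∀ a s, s ∈ lam a → s.1 = a ∧ s ∈ Γ

/-- `Γ` is a functional relation. -/
def FunctionalARS {O L : Type} (Γ : Set (O × L × O)) : Prop :=
  ∀ a φ b₁ b₂, (a, φ, b₁) ∈ Γ → (a, φ, b₂) ∈ Γ → b₁ = b₂

/-- `π` is a limit point of `ζ`: every finite non-empty prefix of `π` is a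
prefix of some member of `ζ`. -/
def LimPt {O L : Type} (ζ : Set (Deriv O L)) (π : Deriv O L) : Prop :=
  π.NE ∧ ∀ π₀ : Deriv O L, π₀.Finite → π₀.NE → DPrefix π₀ π → ∃ π' ∈ ζ, DPrefix π₀ π'

/-- `ζ` is closed: it contains all its limit points. -/
def ClosedStrat {O L : Type} (ζ : Set (Deriv O L)) : Prop :=
  ∀ π, LimPt ζ π → π ∈ ζ

/-- `ζ` is closed under non-empty prefixes. -/
def PrefClosed {O L : Type} (ζ : Set (Deriv O L)) : Prop :=
  ∀ π ∈ ζ, ∀ π₀ : Deriv O L, π₀.NE → DPrefix π₀ π → π₀ ∈ ζ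


section Helpers
variable {O L : Type}

lemma step_ne_none_of_le (π : Deriv O L) : ∀ {j : ℕ}, π.step j ≠ none → ∀ i ≤ j, π.step i ≠ none := by
  intro j
  induction j with
  | zero => intro h i hi; simpa [Nat.le_zero.mp hi] using h
  | succ k ih =>
    intro h i hi
    rcases Nat.eq_or_lt_of_le hi with rfl | h'
    · exact h
    · exact ih (π.initial k h) i (Nat.lt_succ_iff.mp h')

lemma histD_zero (π : Deriv O L) : histD π 0 = [] := by simp [histD]

lemma histD_succ (π : Deriv O L) {j : ℕ} {s} (h : π.step j = some s) :
    histD π (j + 1) = histD π j ++ [(s.1, s.2.1)] := by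
  simp [histD, List.range_succ, h]

lemma histD_length (π : Deriv O L) : ∀ {j : ℕ}, (∀ i < j, π.step i ≠ none) →
    (histD π j).length = j := by
  intro j
  induction j with
  | zero => intro _; simp [histD]
  | succ k ih =>
    intro h
    obtain ⟨s, hs⟩ := Option.ne_none_iff_exists'.mp (h k (Nat.lt_succ_self k))
    rw [histD_succ π hs]
    simp [ih (fun i hi => h i (hi.trans (Nat.lt_succ_self k)))]

lemma histD_get? (π : Deriv O L) : ∀ {j : ℕ}, (∀ i < j, π.step i ≠ none) →
    ∀ i < j, ∀ s, π.step i = some s → (histD π j)[i]? = some (s.1, s.2.1) := by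
  intro j
  induction j with
  | zero => intro _ i hi; omega
  | succ k ih =>
    intro h i hi s hs
    have hk : ∀ i < k, π.step i ≠ none := fun i hi => h i (hi.trans (Nat.lt_succ_self k))
    obtain ⟨t, ht⟩ := Option.ne_none_iff_exists'.mp (h k (Nat.lt_succ_self k))
    rw [histD_succ π ht]
    rcases Nat.lt_succ_iff_lt_or_eq.mp hi with h' | rfl
    · rw [List.getElem?_append_left]
      · exact ih hk i h' s hs
      · rw [histD_length π hk]; exact h'
    · have : s = t := by rw [hs] at ht; exact Option.some.inj ht
      subst this
      have := List.getElem?_concat_length (l := histD π i) (a := (s.1, s.2.1))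
      rwa [histD_length π hk] at this

lemma histD_take (π : Deriv O L) : ∀ {j : ℕ}, (∀ i < j, π.step i ≠ none) →
    ∀ i ≤ j, (histD π j).take i = histD π i := by
  intro j
  induction j with
  | zero => intro _ i hi; simp [Nat.le_zero.mp hi, histD]
  | succ k ih =>
    intro h i hi
    have hk : ∀ i < k, π.step i ≠ none := fun i hi => h i (hi.trans (Nat.lt_succ_self k))
    obtain ⟨t, ht⟩ := Option.ne_none_iff_exists'.mp (h k (Nat.lt_succ_self k))
    rw [histD_succ π ht]
    rcases Nat.lt_succ_iff_lt_or_eq.mp (Nat.lt_succ_of_le hi) with h' | rfl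
    · rw [List.take_append_of_le_length (by rw [histD_length π hk]; omega)]
      exact ih hk i (by omega)
    · rw [histD_succ π ht]
      apply List.take_of_length_le
      simp [histD_length π hk]

lemma histD_congr (π₀ π : Deriv O L) {j : ℕ} (h : ∀ i < j, π₀.step i = π.step i) :
    histD π₀ j = histD π j := by
  unfold histD
  exact List.filterMap_congr (by intro i hi; rw [h i (List.mem_range.mp hi)])

/-- The extension of any intensional strategy is closed under non-empty prefixes. -/
lemma extOf_prefix {lam : List (O × L) → O → Set (O × L × O)} {π π₀ : Deriv O L}
    (hπ : π ∈ ExtOf lam) (hNE : π₀.NE) (hpre : DPrefix π₀ π) : π₀ ∈ ExtOf lam := by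
  refine ⟨hNE, ?_⟩
  intro j s hs
  have hdef : ∀ i < j, π₀.step i ≠ none :=
    fun i hi => step_ne_none_of_le π₀ (by simp [hs]) i hi.le
  have hcongr : ∀ i < j, π₀.step i = π.step i := by
    intro i hi
    obtain ⟨t, ht⟩ := Option.ne_none_iff_exists'.mp (hdef i hi)
    rw [ht, hpre i t ht]
  rw [histD_congr π₀ π hcongr]
  exact hπ.2 j s (hpre j s hs)

/-- Next object along a history, given the current object `a`. -/
def nxtO (α : List (O × L)) (a : O) (i : ℕ) : O :=
  match α[i + 1]? with
  | some p => p.1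
  | none => a

/-- The history `α` with current object `a` is entirely consistent with `lam'`. -/
def Cons (lam' : List (O × L) → O → Set (O × L × O)) (α : List (O × L)) (a : O) : Prop :=
  ∀ i p, α[i]? = some p → (p.1, p.2, nxtO α a i) ∈ lam' (α.take i) p.1

lemma nxtO_eq (π : Deriv O L) {j : ℕ} {s} (hs : π.step j = some s) {i : ℕ} {t}
    (hi : i < j) (ht : π.step i = some t) : nxtO (histD π j) s.1 i = t.2.2 := by
  have hdef : ∀ l < j, π.step l ≠ none :=
    fun l hl => step_ne_none_of_le π (by simp [hs]) l hl.le
  rcases Nat.lt_or_ge (i + 1) j with h' | h'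
  · obtain ⟨u, hu⟩ := Option.ne_none_iff_exists'.mp (hdef (i + 1) h')
    have := histD_get? π hdef (i + 1) h' u hu
    simp only [nxtO, this]
    exact π.comp i t u ht hu
  · have hij : i + 1 = j := by omega
    have hget : (histD π j)[i + 1]? = none := by
      rw [List.getElem?_eq_none_iff]
      rw [histD_length π hdef]; omega
    simp only [nxtO, hget]
    exact π.comp i t s ht (by rw [hij]; exact hs)

lemma cons_iff (π : Deriv O L) {j : ℕ} {s} (hs : π.step j = some s)
    (lam' : List (O × L) → O → Set (O × L × O)) :
    Cons lam' (histD π j) s.1 ↔ ∀ i < j, ∀ t, π.step i = some t → t ∈ lam' (histD π i) t.1 := by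
  have hdef : ∀ l < j, π.step l ≠ none :=
    fun l hl => step_ne_none_of_le π (by simp [hs]) l hl.le
  constructor
  · intro hc i hi t ht
    have hget := histD_get? π hdef i hi t ht
    have := hc i (t.1, t.2.1) hget
    rw [nxtO_eq π hs hi ht, histD_take π hdef i hi.le] at this
    simpa using this
  · intro h i p hp
    have hi : i < j := by
      by_contra hge
      rw [List.getElem?_eq_none_iff.mpr (by rw [histD_length π hdef]; omega)] at hp
      exact nomatch hp
    obtain ⟨t, ht⟩ := Option.ne_none_iff_exists'.mp (hdef i hi)
    have hget := histD_get? π hdef i hi t ht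
    rw [hget] at hp
    have hpt : p = (t.1, t.2.1) := (Option.some.inj hp).symm
    subst hpt
    rw [histD_take π hdef i hi.le, nxtO_eq π hs hi ht]
    simpa using h i hi t ht

end Helpers

/-- The linear derivation `0 → 1 → ⋯ → n` over `ℕ`. -/
def lin (n : ℕ) : Deriv ℕ Unit where
  step i := if i < n then some (i, (), i + 1) else none
  initial i h := by
    try dsimp only at h ⊢
    by_cases hi : i < n
    · simp [hi]
    · exfalso; apply h; rw [if_neg (by omega)]
  comp i s t hs ht := by
    try dsimp only at hs ht
    split at hs
    · split at ht
      · cases Option.some.inj hs; cases Option.some.inj ht; rfl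
      · exact nomatch ht
    · exact nomatch hs

/-- the class of abstract strategies arising as extensions of
intensional strategies with memory is closed under arbitrary (non-empty-indexed)
intersections and finite unions, but not under complement (relative to the set
of non-empty derivations over the ARS). -/
theorem extension_class_closure_properties :
    (∀ (O L : Type) (Γ : Set (O × L × O)), FunctionalARS Γ →
      ∀ (ι : Type), Nonempty ι → ∀ ζ : ι → Set (Deriv O L),
        (∀ i, ∃ lam, WfStrat Γ lam ∧ ExtOf lam = ζ i) →
        ∃ lam, WfStrat Γ lam ∧ ExtOf lam = ⋂ i, ζ i) ∧
    (∀ (O L : Type) (Γ : Set (O × L × O)), FunctionalARS Γ →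
      ∀ ζ₁ ζ₂ : Set (Deriv O L),
        (∃ lam, WfStrat Γ lam ∧ ExtOf lam = ζ₁) →
        (∃ lam, WfStrat Γ lam ∧ ExtOf lam = ζ₂) →
        ∃ lam, WfStrat Γ lam ∧ ExtOf lam = ζ₁ ∪ ζ₂) ∧
    (∃ (O L : Type) (Γ : Set (O × L × O)), FunctionalARS Γ ∧
      ∃ ζ : Set (Deriv O L), (∃ lam, WfStrat Γ lam ∧ ExtOf lam = ζ) ∧
        ¬ ∃ lam, WfStrat Γ lam ∧
            ExtOf lam = {π : Deriv O L | π.NE ∧ π.Over Γ ∧ π ∉ ζ}) := by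
  refine ⟨?_, ?_, ?_⟩
  · -- closure under arbitrary intersections
    intro O L Γ _ ι hι ζ h
    choose lam hwf hext using h
    refine ⟨fun α a => ⋂ i, lam i α a, ?_, ?_⟩
    · intro α a s hs
      obtain ⟨i⟩ := hι
      exact hwf i α a s (Set.mem_iInter.mp hs i)
    · ext π
      simp only [ExtOf, Set.mem_setOf_eq, Set.mem_iInter, ← hext]
      constructor
      · rintro ⟨hNE, h2⟩ i
        exact ⟨hNE, fun j s hs => h2 j s hs i⟩
      · intro h
        obtain ⟨i⟩ := hι
        exact ⟨(h i).1, fun j s hs i => (h i).2 j s hs⟩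
  · -- closure under binary unions
    rintro O L Γ _ ζ₁ ζ₂ ⟨lam₁, hwf₁, hext₁⟩ ⟨lam₂, hwf₂, hext₂⟩
    refine ⟨fun α a => {s ∈ lam₁ α a | Cons lam₁ α a} ∪ {s ∈ lam₂ α a | Cons lam₂ α a}, ?_, ?_⟩
    · intro α a s hs
      rcases hs with ⟨h, _⟩ | ⟨h, _⟩
      · exact hwf₁ α a s h
      · exact hwf₂ α a s h
    · subst hext₁ hext₂
      ext π
      simp only [ExtOf, Set.mem_setOf_eq, Set.mem_union]
      constructor
      · rintro ⟨hNE, h2⟩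
        by_cases hall : ∀ j s, π.step j = some s → s ∈ lam₁ (histD π j) s.1
        · exact Or.inl ⟨hNE, hall⟩
        · push_neg at hall
          obtain ⟨j, s, hs, hns⟩ := hall
          refine Or.inr ⟨hNE, ?_⟩
          have hs2 : s ∈ lam₂ (histD π j) s.1 ∧ Cons lam₂ (histD π j) s.1 := by
            rcases h2 j s hs with ⟨h, _⟩ | h
            · exact absurd h hns
            · exact h
          intro k t ht
          rcases Nat.lt_trichotomy k j with hk | hk | hk
          · exact (cons_iff π hs lam₂).mp hs2.2 k hk t ht
          · subst hk
            rw [hs] at ht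
            rw [← Option.some.inj ht]
            exact hs2.1
          · rcases h2 k t ht with ⟨h, hc⟩ | ⟨h, _⟩
            · exact absurd ((cons_iff π ht lam₁).mp hc j hk s hs) hns
            · exact h
      · rintro (⟨hNE, h2⟩ | ⟨hNE, h2⟩)
        · exact ⟨hNE, fun j s hs => Or.inl
            ⟨h2 j s hs, (cons_iff π hs lam₁).mpr fun i _ t ht => h2 i t ht⟩⟩
        · exact ⟨hNE, fun j s hs => Or.inr
            ⟨h2 j s hs, (cons_iff π hs lam₂).mpr fun i _ t ht => h2 i t ht⟩⟩
  · -- not closed under complement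
    refine ⟨ℕ, Unit, {s | s.2.2 = s.1 + 1}, ?_, ?_⟩
    · intro a φ b₁ b₂ h₁ h₂
      simp only [Set.mem_setOf_eq] at h₁ h₂
      omega
    · classical
      set lam0 : List (ℕ × Unit) → ℕ → Set (ℕ × Unit × ℕ) :=
        fun α a => if α = [] then {(a, (), a + 1)} else ∅ with hlam0
      refine ⟨ExtOf lam0, ⟨lam0, ?_, rfl⟩, ?_⟩
      · intro α a s hs
        simp only [hlam0] at hs
        split at hs
        · rw [Set.mem_singleton_iff] at hs
          subst hs
          exact ⟨rfl, rfl⟩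
        · exact absurd hs (Set.notMem_empty s)
      · rintro ⟨lam, hwf, hext⟩
        have hstep1 : (lin 1).step 0 = some (0, (), 1) := by simp [lin]
        have hstep20 : (lin 2).step 0 = some (0, (), 1) := by simp [lin]
        have hstep21 : (lin 2).step 1 = some (1, (), 2) := by simp [lin]
        have hNE1 : (lin 1).NE := by simp [Deriv.NE, hstep1]
        have hpre : DPrefix (lin 1) (lin 2) := by
          intro i s hs
          simp only [lin] at hs ⊢
          split at hs
          · rw [if_pos (by omega)]; exact hs
          · exact absurd hs (by simp)
        -- lin 1 is in ζ = ExtOf lam0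
        have h1mem : lin 1 ∈ ExtOf lam0 := by
          refine ⟨hNE1, ?_⟩
          intro j s hs
          have hj : j = 0 := by
            by_contra hj
            simp only [lin, if_neg (by omega : ¬ j < 1)] at hs
            exact nomatch hs
          subst hj
          rw [hstep1] at hs
          rw [← Option.some.inj hs]
          simp [hlam0, histD_zero]
        -- lin 2 is in the complement
        have h2mem : lin 2 ∈ {π : Deriv ℕ Unit |
            π.NE ∧ π.Over {s | s.2.2 = s.1 + 1} ∧ π ∉ ExtOf lam0} := by
          refine ⟨by simp [Deriv.NE, hstep20], ?_, ?_⟩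
          · intro i s hs
            simp only [lin] at hs
            split at hs
            · rw [← Option.some.inj hs]; rfl
            · exact absurd hs (by simp)
          · rintro ⟨_, h2⟩
            have := h2 1 (1, (), 2) hstep21
            rw [histD_succ (lin 2) hstep20, histD_zero] at this
            simp [hlam0] at this
        rw [← hext] at h2mem
        have h1mem' : lin 1 ∈ ExtOf lam := extOf_prefix h2mem hNE1 hpre
        rw [hext] at h1mem'
        exact h1mem'.2.2 h1mem
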